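/- For every t = 1,…,T, the cost-to-go function 𝒬_{t+1} is a convex function and 𝒳_t ⊆ int(dom 𝒬_{t+1}). -/

import Mathlib

open Matrix Set

noncomputable section

/-- Convexity of an extended-real-valued function, via convexity of its epigraph. -/
def ERealConvex {E : Type*} [AddCommGroup E] [Module ℝ E] (φ : E → EReal) : Prop :=
  Convex ℝ {pz : E × ℝ | φ pz.1 ≤ (pz.2 : EReal)}

/-- A proper extended-real-valued function: never −∞ and not identically +∞. -/
def ERealProper {E : Type*} (φ : E → EReal) : Prop :=
  (∀ x, φ x ≠ ⊥) ∧ (∃ x, φ x ≠ ⊤)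

lemma ERealConvex.combo {E : Type*} [AddCommGroup E] [Module ℝ E] {φ : E → EReal}
    (h : ERealConvex φ) {x₁ x₂ : E} {c₁ c₂ a b : ℝ}
    (h₁ : φ x₁ ≤ (c₁ : EReal)) (h₂ : φ x₂ ≤ (c₂ : EReal))
    (ha : 0 ≤ a) (hb : 0 ≤ b) (hab : a + b = 1) :
    φ (a • x₁ + b • x₂) ≤ ((a * c₁ + b * c₂ : ℝ) : EReal) := by
  have := h (x := (x₁, c₁)) (y := (x₂, c₂)) h₁ h₂ ha hb hab
  simpa [Prod.smul_mk, Prod.mk_add_mk, smul_eq_mul] using this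

lemma ERealConvex.combo_bot {E : Type*} [AddCommGroup E] [Module ℝ E] {φ : E → EReal}
    (h : ERealConvex φ) {x₁ x₂ : E} {c₂ a b : ℝ}
    (h₁ : φ x₁ = ⊥) (h₂ : φ x₂ ≤ (c₂ : EReal))
    (ha : 0 < a) (hb : 0 ≤ b) (hab : a + b = 1) :
    φ (a • x₁ + b • x₂) = ⊥ := by
  rw [EReal.eq_bot_iff_forall_lt]
  intro y
  have key : ∀ M : ℝ, φ (a • x₁ + b • x₂) ≤ ((a * M + b * c₂ : ℝ) : EReal) := fun M =>
    h.combo (by rw [h₁]; exact bot_le) h₂ ha.le hb hab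
  refine lt_of_le_of_lt (key ((y - 1 - b * c₂) / a)) ?_
  rw [EReal.coe_lt_coe_iff]
  have hane : a ≠ 0 := ne_of_gt ha
  have : a * ((y - 1 - b * c₂) / a) = y - 1 - b * c₂ := by field_simp
  rw [this]; linarith

lemma ERealConvex.comp_fst {E F : Type*} [AddCommGroup E] [Module ℝ E]
    [AddCommGroup F] [Module ℝ F] {φ : E → EReal} (h : ERealConvex φ) :
    ERealConvex (fun z : E × F => φ z.1) := by
  intro pz₁ h₁ pz₂ h₂ a b ha hb hab
  have := h (x := (pz₁.1.1, pz₁.2)) (y := (pz₂.1.1, pz₂.2)) h₁ h₂ ha hb hab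
  simpa using this

lemma ereal_ne_top_exists_le {x : EReal} (h : x ≠ ⊤) : ∃ c : ℝ, x ≤ (c : EReal) := by
  induction x using EReal.rec with
  | bot => exact ⟨0, bot_le⟩
  | coe r => exact ⟨r, le_rfl⟩
  | top => exact absurd rfl h

lemma ereal_exists_real {x : EReal} (h1 : x ≠ ⊥) (h2 : x ≠ ⊤) : ∃ r : ℝ, x = (r : EReal) := by
  induction x using EReal.rec with
  | bot => exact absurd rfl h1
  | coe r => exact ⟨r, rfl⟩
  | top => exact absurd rfl h2

lemma ereal_le_coe_cases {s : EReal} {c : ℝ} (h : s ≤ (c : EReal)) :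
    s = ⊥ ∨ ∃ r : ℝ, s = (r : EReal) ∧ r ≤ c := by
  induction s using EReal.rec with
  | bot => exact Or.inl rfl
  | coe r => exact Or.inr ⟨r, rfl, EReal.coe_le_coe_iff.mp h⟩
  | top => exact absurd h (by simp)

lemma ereal_le_of_forall_eps {x : EReal} {r : ℝ}
    (h : ∀ ε : ℝ, 0 < ε → x ≤ ((r + ε : ℝ) : EReal)) : x ≤ (r : EReal) := by
  by_contra hc
  push_neg at hc
  induction x using EReal.rec with
  | bot => exact absurd hc (by simp)
  | coe s =>
    have hrs : r < s := EReal.coe_lt_coe_iff.mp hc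
    have := h ((s - r) / 2) (by linarith)
    rw [EReal.coe_le_coe_iff] at this
    linarith
  | top =>
    have h2 := top_le_iff.mp (h 1 one_pos)
    exact EReal.coe_ne_top _ h2

lemma combo_sum {E : Type*} [AddCommGroup E] [Module ℝ E] {φ ψ : E → EReal}
    (hφ : ERealConvex φ) (hψ : ERealConvex ψ) (hφbot : ∀ z, φ z ≠ ⊥)
    {z₁ z₂ : E} {c₁ c₂ a b : ℝ}
    (h₁ : φ z₁ + ψ z₁ ≤ (c₁ : EReal)) (h₂ : φ z₂ + ψ z₂ ≤ (c₂ : EReal))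
    (ha : 0 < a) (hb : 0 < b) (hab : a + b = 1) :
    φ (a • z₁ + b • z₂) + ψ (a • z₁ + b • z₂) ≤ ((a * c₁ + b * c₂ : ℝ) : EReal) := by
  -- ψ z₁ and ψ z₂ are not ⊤
  have hψt : ∀ z, (c : ℝ) → φ z + ψ z ≤ (c : EReal) → ψ z ≠ ⊤ := by
    intro z c hzc hzt
    rw [hzt, EReal.add_top_iff_ne_bot.mpr (hφbot z)] at hzc
    exact absurd hzc (by simp)
  -- main case split on whether ψ hits ⊥
  by_cases hb1 : ψ z₁ = ⊥
  · obtain ⟨c, hc⟩ := ereal_ne_top_exists_le (hψt z₂ c₂ h₂)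
    have : ψ (a • z₁ + b • z₂) = ⊥ := hψ.combo_bot hb1 hc ha hb.le hab
    rw [this, EReal.add_bot]
    exact bot_le
  by_cases hb2 : ψ z₂ = ⊥
  · obtain ⟨c, hc⟩ := ereal_ne_top_exists_le (hψt z₁ c₁ h₁)
    have : ψ (a • z₁ + b • z₂) = ⊥ := by
      rw [add_comm (a • z₁)]
      exact hψ.combo_bot hb2 hc hb ha.le (by linarith)
    rw [this, EReal.add_bot]
    exact bot_le
  -- both ψ values are real; then φ values are real too
  have hφt : ∀ z, (ψz : EReal) → (c : ℝ) → ψ z ≠ ⊥ → φ z + ψ z ≤ (c : EReal) → φ z ≠ ⊤ := by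
    intro z ψz c hzb hzc hzt
    rw [hzt, EReal.top_add_of_ne_bot hzb] at hzc
    exact absurd hzc (by simp)
  obtain ⟨α₁, hα₁⟩ : ∃ r : ℝ, φ z₁ = (r : EReal) :=
    ereal_exists_real (hφbot z₁) (hφt z₁ 0 c₁ hb1 h₁)
  obtain ⟨α₂, hα₂⟩ : ∃ r : ℝ, φ z₂ = (r : EReal) :=
    ereal_exists_real (hφbot z₂) (hφt z₂ 0 c₂ hb2 h₂)
  obtain ⟨β₁, hβ₁⟩ : ∃ r : ℝ, ψ z₁ = (r : EReal) :=
    ereal_exists_real hb1 (hψt z₁ c₁ h₁)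
  obtain ⟨β₂, hβ₂⟩ : ∃ r : ℝ, ψ z₂ = (r : EReal) :=
    ereal_exists_real hb2 (hψt z₂ c₂ h₂)
  rw [hα₁, hβ₁, ← EReal.coe_add, EReal.coe_le_coe_iff] at h₁
  rw [hα₂, hβ₂, ← EReal.coe_add, EReal.coe_le_coe_iff] at h₂
  have hcφ : φ (a • z₁ + b • z₂) ≤ ((a * α₁ + b * α₂ : ℝ) : EReal) :=
    hφ.combo (le_of_eq hα₁) (le_of_eq hα₂) ha.le hb.le hab
  have hcψ : ψ (a • z₁ + b • z₂) ≤ ((a * β₁ + b * β₂ : ℝ) : EReal) :=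
    hψ.combo (le_of_eq hβ₁) (le_of_eq hβ₂) ha.le hb.le hab
  calc φ (a • z₁ + b • z₂) + ψ (a • z₁ + b • z₂)
      ≤ ((a * α₁ + b * α₂ : ℝ) : EReal) + ((a * β₁ + b * β₂ : ℝ) : EReal) :=
        add_le_add hcφ hcψ
    _ = (((a * α₁ + b * α₂) + (a * β₁ + b * β₂) : ℝ) : EReal) := (EReal.coe_add _ _).symm
    _ ≤ ((a * c₁ + b * c₂ : ℝ) : EReal) := by
        rw [EReal.coe_le_coe_iff]
        nlinarith [h₁, h₂, ha.le, hb.le]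

/-- under (H1), each cost-to-go function `𝒬_{t+1}` is convex and
`𝒳_t ⊆ int(dom 𝒬_{t+1})`. -/
theorem stmt_0
    (n p q T : ℕ) (hn : 1 ≤ n) (hp : 1 ≤ p) (hq : 1 ≤ q) (hT : 1 ≤ T)
    (x₀ : EuclideanSpace ℝ (Fin n))
    (𝒳 : ℕ → Set (EuclideanSpace ℝ (Fin n)))
    (h𝒳₀ : 𝒳 0 = {x₀})
    (h𝒳 : ∀ t, 1 ≤ t → t ≤ T → (𝒳 t).Nonempty ∧ Convex ℝ (𝒳 t) ∧ IsCompact (𝒳 t))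
    (f : ℕ → EuclideanSpace ℝ (Fin n) → EuclideanSpace ℝ (Fin n) → EReal)
    (hf : ∀ t, 1 ≤ t → t ≤ T →
      ERealProper (fun z : EuclideanSpace ℝ (Fin n) × EuclideanSpace ℝ (Fin n) => f t z.1 z.2) ∧
      LowerSemicontinuous
        (fun z : EuclideanSpace ℝ (Fin n) × EuclideanSpace ℝ (Fin n) => f t z.1 z.2) ∧
      ERealConvex
        (fun z : EuclideanSpace ℝ (Fin n) × EuclideanSpace ℝ (Fin n) => f t z.1 z.2) ∧
      (𝒳 t ×ˢ 𝒳 (t - 1)) ⊆ interior {z : EuclideanSpace ℝ (Fin n) × EuclideanSpace ℝ (Fin n) |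
        f t z.1 z.2 ≠ ⊤})
    (g : ℕ → Fin p → EuclideanSpace ℝ (Fin n) → EuclideanSpace ℝ (Fin n) → EReal)
    (hg : ∀ t, 1 ≤ t → t ≤ T → ∀ i,
      ERealProper (fun z : EuclideanSpace ℝ (Fin n) × EuclideanSpace ℝ (Fin n) => g t i z.1 z.2) ∧
      LowerSemicontinuous
        (fun z : EuclideanSpace ℝ (Fin n) × EuclideanSpace ℝ (Fin n) => g t i z.1 z.2) ∧
      ERealConvex
        (fun z : EuclideanSpace ℝ (Fin n) × EuclideanSpace ℝ (Fin n) => g t i z.1 z.2) ∧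
      (𝒳 t ×ˢ 𝒳 (t - 1)) ⊆ interior {z : EuclideanSpace ℝ (Fin n) × EuclideanSpace ℝ (Fin n) |
        g t i z.1 z.2 ≠ ⊤})
    (A B : ℕ → Matrix (Fin q) (Fin n) ℝ) (b : ℕ → Fin q → ℝ)
    (X : ℕ → EuclideanSpace ℝ (Fin n) → Set (EuclideanSpace ℝ (Fin n)))
    (hX : ∀ t y, X t y =
      {x ∈ 𝒳 t | (∀ i, g t i x y ≤ 0) ∧ (A t).mulVec x + (B t).mulVec y = b t})
    -- Assumption (H1)
    (hH1a : (X 1 x₀).Nonempty)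
    (hH1b : ∀ t, 2 ≤ t → t ≤ T →
      𝒳 (t - 1) ⊆ interior {y | (X t y ∩ intrinsicInterior ℝ (𝒳 t)).Nonempty})
    -- the cost-to-go functions
    (Q : ℕ → EuclideanSpace ℝ (Fin n) → EReal)
    (hQT : ∀ y, Q (T + 1) y = 0)
    (hQ : ∀ t, 1 ≤ t → t ≤ T → ∀ y,
      Q t y = sInf ((fun x => f t x y + Q (t + 1) x) '' X t y)) :
    ∀ t, 1 ≤ t → t ≤ T →
      ERealConvex (Q (t + 1)) ∧ 𝒳 t ⊆ interior {y | Q (t + 1) y ≠ ⊤} := by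
  have main : ∀ d : ℕ, ∀ t : ℕ, 1 ≤ t → t + d = T →
      ERealConvex (Q (t + 1)) ∧ 𝒳 t ⊆ interior {y | Q (t + 1) y ≠ ⊤} := by
    intro d
    induction d with
    | zero =>
      intro t ht1 hd
      have htT : t = T := by omega
      subst htT
      constructor
      · intro pz₁ h₁ pz₂ h₂ μ ν hμ hν hμν
        simp only [mem_setOf_eq, hQT] at h₁ h₂ ⊢
        have e₁ : (0:ℝ) ≤ pz₁.2 := by exact_mod_cast h₁
        have e₂ : (0:ℝ) ≤ pz₂.2 := by exact_mod_cast h₂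
        have e : (0:ℝ) ≤ (μ • pz₁ + ν • pz₂).2 := by
          simp only [Prod.snd_add, Prod.smul_snd, smul_eq_mul]
          exact add_nonneg (mul_nonneg hμ e₁) (mul_nonneg hν e₂)
        exact_mod_cast e
      · intro y _
        have huniv : {y : EuclideanSpace ℝ (Fin n) | Q (t+1) y ≠ ⊤} = univ := by
          ext y'; simp [hQT]
        rw [huniv, interior_univ]
        trivial
    | succ d ih =>
      intro t ht1 hd
      obtain ⟨hQconv2, hQdom2⟩ := ih (t+1) (by omega) (by omega)
      have hQs := hQ (t+1) (by omega) (by omega)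
      have hφconv : ERealConvex
          (fun z : EuclideanSpace ℝ (Fin n) × EuclideanSpace ℝ (Fin n) => f (t+1) z.1 z.2) :=
        (hf (t+1) (by omega) (by omega)).2.2.1
      have hφbot : ∀ z : EuclideanSpace ℝ (Fin n) × EuclideanSpace ℝ (Fin n),
          f (t+1) z.1 z.2 ≠ ⊥ := fun z => ((hf (t+1) (by omega) (by omega)).1).1 z
      have hψconv : ERealConvex
          (fun z : EuclideanSpace ℝ (Fin n) × EuclideanSpace ℝ (Fin n) => Q (t+1+1) z.1) :=
        hQconv2.comp_fst
      have h𝒳conv : Convex ℝ (𝒳 (t+1)) := (h𝒳 (t+1) (by omega) (by omega)).2.1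
      have hCconv : Convex ℝ {z : EuclideanSpace ℝ (Fin n) × EuclideanSpace ℝ (Fin n) |
          z.1 ∈ X (t+1) z.2} := by
        intro z₁ h₁ z₂ h₂ μ ν hμ hν hμν
        simp only [mem_setOf_eq, hX] at h₁ h₂ ⊢
        obtain ⟨hm₁, hg₁, hl₁⟩ := h₁
        obtain ⟨hm₂, hg₂, hl₂⟩ := h₂
        refine ⟨?_, ?_, ?_⟩
        · have := h𝒳conv hm₁ hm₂ hμ hν hμν
          simpa using this
        · intro i
          have hgi : ERealConvex
              (fun z : EuclideanSpace ℝ (Fin n) × EuclideanSpace ℝ (Fin n) =>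
                g (t+1) i z.1 z.2) := (hg (t+1) (by omega) (by omega) i).2.2.1
          have hh1 : g (t+1) i z₁.1 z₁.2 ≤ ((0:ℝ) : EReal) := by simpa using hg₁ i
          have hh2 : g (t+1) i z₂.1 z₂.2 ≤ ((0:ℝ) : EReal) := by simpa using hg₂ i
          have := hgi.combo hh1 hh2 hμ hν hμν
          simpa using this
        · have hmv : ∀ (M : Matrix (Fin q) (Fin n) ℝ) (u v : EuclideanSpace ℝ (Fin n)),
              M.mulVec (μ • u + ν • v) = μ • M.mulVec u + ν • M.mulVec v := by
            intro M u v
            show M.mulVec (μ • (u : Fin n → ℝ) + ν • (v : Fin n → ℝ)) = _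
            rw [Matrix.mulVec_add, Matrix.mulVec_smul, Matrix.mulVec_smul]
          simp only [Prod.fst_add, Prod.snd_add, Prod.smul_fst, Prod.smul_snd]
          simp only [WithLp.ofLp_add, WithLp.ofLp_smul]
          rw [hmv, hmv]
          have hcomb : μ • ((A (t+1)).mulVec z₁.1 + (B (t+1)).mulVec z₁.2)
              + ν • ((A (t+1)).mulVec z₂.1 + (B (t+1)).mulVec z₂.2) = b (t+1) := by
            rw [hl₁, hl₂, ← add_smul, hμν, one_smul]
          rw [← hcomb]
          simp only [smul_add]
          abel
      have hconv : ERealConvex (Q (t+1)) := by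
        rintro ⟨y₁, r₁⟩ hy₁ ⟨y₂, r₂⟩ hy₂ μ ν hμ hν hμν
        simp only [mem_setOf_eq] at hy₁ hy₂
        show Q (t+1) ((μ • (y₁, r₁) + ν • (y₂, r₂)).1) ≤ ↑((μ • (y₁, r₁) + ν • (y₂, r₂)).2)
        simp only [Prod.smul_mk, Prod.mk_add_mk, smul_eq_mul]
        rcases eq_or_lt_of_le hμ with hμ0 | hμ0
        · have hν1 : ν = 1 := by linarith
          subst hν1
          rw [← hμ0]
          simpa using hy₂
        rcases eq_or_lt_of_le hν with hν0 | hν0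
        · have hμ1 : μ = 1 := by linarith
          subst hμ1
          rw [← hν0]
          simpa using hy₁
        apply ereal_le_of_forall_eps
        intro ε hε
        have key : ∀ (y : EuclideanSpace ℝ (Fin n)) (r : ℝ), Q (t+1) y ≤ (r : EReal) →
            ∃ x, x ∈ X (t+1) y ∧ f (t+1) x y + Q (t+1+1) x ≤ ((r + ε : ℝ) : EReal) := by
          intro y r hyr
          rw [hQs y] at hyr
          have hlt : sInf ((fun x => f (t+1) x y + Q (t+1+1) x) '' X (t+1) y)
              < ((r + ε : ℝ) : EReal) :=
            lt_of_le_of_lt hyr (by exact_mod_cast (by linarith : r < r + ε))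
          obtain ⟨s, hs, hslt⟩ := sInf_lt_iff.mp hlt
          obtain ⟨x, hx, rfl⟩ := hs
          exact ⟨x, hx, hslt.le⟩
        obtain ⟨x₁, hx₁, hfx₁⟩ := key y₁ r₁ hy₁
        obtain ⟨x₂, hx₂, hfx₂⟩ := key y₂ r₂ hy₂
        have hsum := combo_sum hφconv hψconv hφbot
          (z₁ := (x₁, y₁)) (z₂ := (x₂, y₂)) hfx₁ hfx₂ hμ0 hν0 hμν
        have hmem : (μ • x₁ + ν • x₂) ∈ X (t+1) (μ • y₁ + ν • y₂) := by
          have := hCconv (x := (x₁, y₁)) (y := (x₂, y₂)) hx₁ hx₂ hμ hν hμν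
          simpa using this
        have hQle : Q (t+1) (μ • y₁ + ν • y₂)
            ≤ f (t+1) (μ • x₁ + ν • x₂) (μ • y₁ + ν • y₂) + Q (t+1+1) (μ • x₁ + ν • x₂) := by
          rw [hQs]
          exact sInf_le ⟨_, hmem, rfl⟩
        have eq1 : μ * (r₁ + ε) + ν * (r₂ + ε) = μ * r₁ + ν * r₂ + ε := by
          linear_combination ε * hμν
        refine hQle.trans ?_
        simp only [Prod.smul_mk, Prod.mk_add_mk] at hsum
        rw [eq1] at hsum
        exact hsum
      refine ⟨hconv, ?_⟩
      have hU₁ : 𝒳 t ⊆ interior {y | (X (t+1) y ∩ intrinsicInterior ℝ (𝒳 (t+1))).Nonempty} := by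
        have := hH1b (t+1) (by omega) (by omega)
        simpa using this
      have hS₂ : 𝒳 t ⊆ interior {y | ∀ x ∈ 𝒳 (t+1), f (t+1) x y ≠ ⊤} := by
        intro y hy
        have hcomp : IsCompact (𝒳 (t+1)) := (h𝒳 (t+1) (by omega) (by omega)).2.2
        have hWopen : IsOpen (interior {z : EuclideanSpace ℝ (Fin n) × EuclideanSpace ℝ (Fin n) |
            f (t+1) z.1 z.2 ≠ ⊤}) := isOpen_interior
        have hsub : 𝒳 (t+1) ×ˢ ({y} : Set (EuclideanSpace ℝ (Fin n)))
            ⊆ interior {z : EuclideanSpace ℝ (Fin n) × EuclideanSpace ℝ (Fin n) |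
              f (t+1) z.1 z.2 ≠ ⊤} := by
          intro z hz
          have hdomf := (hf (t+1) (by omega) (by omega)).2.2.2
          simp only [Nat.add_sub_cancel] at hdomf
          apply hdomf
          rw [mem_prod] at hz ⊢
          exact ⟨hz.1, hz.2 ▸ hy⟩
        obtain ⟨u, v, hu, hv, hsu, hyv, huv⟩ :=
          generalized_tube_lemma hcomp isCompact_singleton hWopen hsub
        apply mem_interior.mpr
        refine ⟨v, ?_, hv, hyv rfl⟩
        intro y' hy' x hx
        have : (x, y') ∈ interior {z : EuclideanSpace ℝ (Fin n) × EuclideanSpace ℝ (Fin n) |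
            f (t+1) z.1 z.2 ≠ ⊤} := huv ⟨hsu hx, hy'⟩
        exact interior_subset this
      intro y hy
      apply mem_interior.mpr
      refine ⟨interior {y | (X (t+1) y ∩ intrinsicInterior ℝ (𝒳 (t+1))).Nonempty}
        ∩ interior {y | ∀ x ∈ 𝒳 (t+1), f (t+1) x y ≠ ⊤}, ?_,
        isOpen_interior.inter isOpen_interior, ⟨hU₁ hy, hS₂ hy⟩⟩
      rintro y' ⟨h1, h2⟩
      obtain ⟨x, hxX, hxri⟩ := interior_subset h1
      have hx𝒳 : x ∈ 𝒳 (t+1) := intrinsicInterior_subset hxri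
      have hfne : f (t+1) x y' ≠ ⊤ := (interior_subset h2) x hx𝒳
      have hQne : Q (t+1+1) x ≠ ⊤ := interior_subset (hQdom2 hx𝒳)
      show Q (t+1) y' ≠ ⊤
      rw [hQs y']
      intro htop
      have hel : f (t+1) x y' + Q (t+1+1) x = ⊤ :=
        sInf_eq_top.mp htop _ ⟨x, hxX, rfl⟩
      exact (EReal.add_lt_top hfne hQne).ne hel
  intro t ht1 htT
  exact main (T - t) t ht1 (by omega)
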